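/- If T_X(A) = P_X(A) for all measurable sets A, then this common set function is countably additive, i.e., it is a probability measure. -/

import Mathlib

open MeasureTheory

/-- If the containment and capacity functionals of an a.s. nonempty random closed
set coincide on all measurable sets, then the common set function is countably
additive, i.e. it is a probability measure. -/
theorem containment_eq_capacity_countably_additive
    {Ω : Type*} {n : ℕ} [MeasurableSpace Ω]
    (μ : Measure Ω) [IsProbabilityMeasure μ]
    (X : Ω → Set (EuclideanSpace ℝ (Fin n)))
    (hclosed : ∀ ω, IsClosed (X ω))
    (hne : ∀ᵐ ω ∂μ, (X ω).Nonempty)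
    (hmeas : ∀ A : Set (EuclideanSpace ℝ (Fin n)), MeasurableSet A →
      MeasurableSet {ω | X ω ⊆ A})
    (heq : ∀ A : Set (EuclideanSpace ℝ (Fin n)), MeasurableSet A →
      μ {ω | X ω ⊆ A} = μ {ω | (X ω ∩ A).Nonempty}) :
    ∀ f : ℕ → Set (EuclideanSpace ℝ (Fin n)),
      (∀ i, MeasurableSet (f i)) → Pairwise (Function.onFun Disjoint f) →
      μ {ω | X ω ⊆ ⋃ i, f i} = ∑' i, μ {ω | X ω ⊆ f i} := by
  intro f hf hdisj
  have hE : μ {ω | ¬ (X ω).Nonempty} = 0 := by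
    rw [← ae_iff]; exact hne
  have h1 : μ {ω | X ω ⊆ ⋃ i, f i} ≤ ∑' i, μ {ω | X ω ⊆ f i} := by
    calc μ {ω | X ω ⊆ ⋃ i, f i}
        = μ {ω | (X ω ∩ ⋃ i, f i).Nonempty} := heq _ (MeasurableSet.iUnion hf)
      _ = μ (⋃ i, {ω | (X ω ∩ f i).Nonempty}) := by
          congr 1
          ext ω
          simp [Set.inter_iUnion, Set.nonempty_iUnion]
      _ ≤ ∑' i, μ {ω | (X ω ∩ f i).Nonempty} := measure_iUnion_le _
      _ = ∑' i, μ {ω | X ω ⊆ f i} := tsum_congr fun i => (heq _ (hf i)).symm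
  have h2 : ∑' i, μ {ω | X ω ⊆ f i} ≤ μ {ω | X ω ⊆ ⋃ i, f i} := by
    have hd : Pairwise (Function.onFun (MeasureTheory.AEDisjoint μ) fun i => {ω | X ω ⊆ f i}) := by
      intro i j hij
      refine measure_mono_null ?_ hE
      intro ω hω
      simp only [Set.mem_inter_iff, Set.mem_setOf_eq] at hω ⊢
      rintro ⟨x, hx⟩
      exact Set.disjoint_left.mp (hdisj hij) (hω.1 hx) (hω.2 hx)
    rw [← measure_iUnion₀ hd (fun i => (hmeas _ (hf i)).nullMeasurableSet)]
    exact measure_mono (Set.iUnion_subset fun i ω hω => hω.trans (Set.subset_iUnion f i))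
  exact le_antisymm h1 h2
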